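/- arXiv:1106.0072 — 4 statements merged into one kernel-verified Lean document; each statement's English description precedes it below -/
import Mathlib

section
/- Let R be a commutative ring with identity having infinitely many maximal ideals. Then for every natural number n, the graph Γ(R) contains a clique of size n; in particular, the clique number of Γ(R) is infinite. -/
universe u

/-- The co-maximal graph `Ω(R)`: vertices are the elements of `R`, with distinct `x`, `y`
adjacent iff `Rx + Ry = R`. -/
def comaximalGraph (R : Type*) [CommRing R] : SimpleGraph R where
  Adj x y := x ≠ y ∧ Ideal.span {x} ⊔ Ideal.span {y} = ⊤
  symm := ⟨fun _ _ ⟨h1, h2⟩ => ⟨h1.symm, by rwa [sup_comm]⟩⟩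
  loopless := ⟨fun _ ⟨h, _⟩ => h rfl⟩

/-- Vertices of `Γ(R)`: the elements of `R \ (U(R) ∪ J(R))`. -/
def GammaVert (R : Type*) [CommRing R] : Type _ :=
  {x : R // ¬IsUnit x ∧ x ∉ (⊥ : Ideal R).jacobson}

/-- The graph `Γ(R)` induced on `R \ (U(R) ∪ J(R))`: distinct vertices `x`, `y` are
adjacent iff `Rx + Ry = R`. -/
def Gamma (R : Type*) [CommRing R] : SimpleGraph (GammaVert R) where
  Adj a b := a ≠ b ∧ Ideal.span {a.1} ⊔ Ideal.span {b.1} = ⊤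
  symm := ⟨fun _ _ ⟨h1, h2⟩ => ⟨h1.symm, by rwa [sup_comm]⟩⟩
  loopless := ⟨fun _ ⟨h, _⟩ => h rfl⟩

/-- Vertices of `Γ_r(R)`: the principal ideals `Rx` for `x ∈ R \ (U(R) ∪ J(R))`. -/
def GammaRVert (R : Type*) [CommRing R] : Type _ :=
  {I : Ideal R // ∃ x : R, ¬IsUnit x ∧ x ∉ (⊥ : Ideal R).jacobson ∧ I = Ideal.span {x}}

/-- The graph `Γ_r(R)` on `{Rx | x ∈ R \ (U(R) ∪ J(R))}`: distinct vertices `Rx`, `Ry`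
are adjacent iff `Rx + Ry = R`. -/
def GammaR (R : Type*) [CommRing R] : SimpleGraph (GammaRVert R) where
  Adj I J := I ≠ J ∧ I.1 ⊔ J.1 = ⊤
  symm := ⟨fun _ _ ⟨h1, h2⟩ => ⟨h1.symm, by rwa [sup_comm]⟩⟩
  loopless := ⟨fun _ ⟨h, _⟩ => h rfl⟩

/-- A simple graph is a split graph if its vertex set is the disjoint union of a set
inducing a complete graph and an independent set. -/
def IsSplitGraph {V : Type*} (G : SimpleGraph V) : Prop :=
  ∃ K D : Set V, K ∪ D = Set.univ ∧ K ∩ D = ∅ ∧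
    (∀ x ∈ K, ∀ y ∈ K, x ≠ y → G.Adj x y) ∧
    (∀ x ∈ D, ∀ y ∈ D, ¬G.Adj x y)

/-- A simple graph is bipartite if its vertex set is the disjoint union of two sets
such that every edge goes between them. -/
def IsBipartiteGraph {V : Type*} (G : SimpleGraph V) : Prop :=
  ∃ A B : Set V, A ∪ B = Set.univ ∧ A ∩ B = ∅ ∧
    ∀ x y, G.Adj x y → (x ∈ A ∧ y ∈ B) ∨ (x ∈ B ∧ y ∈ A)

/-- A simple graph is complete bipartite if its vertex set is the disjoint union of two
sets such that two vertices are adjacent iff they lie in different parts. -/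
def IsCompleteBipartiteGraph {V : Type*} (G : SimpleGraph V) : Prop :=
  ∃ A B : Set V, A ∪ B = Set.univ ∧ A ∩ B = ∅ ∧
    ∀ x y, G.Adj x y ↔ ((x ∈ A ∧ y ∈ B) ∨ (x ∈ B ∧ y ∈ A))
/-- If `R` has infinitely many maximal ideals, then `Γ(R)` contains cliques of every
finite size; in particular its clique number is infinite. -/
theorem gamma_clique_of_infinitely_many_max (R : Type*) [CommRing R]
    (h : {I : Ideal R | I.IsMaximal}.Infinite) :
    ∀ n : ℕ, ∃ s : Finset (GammaVert R), (Gamma R).IsNClique n s := by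
  intro n
  classical
  obtain e := h.natEmbedding
  set M : ℕ → Ideal R := fun i => (e i : Ideal R) with hMdef
  have hMmax : ∀ i, (M i).IsMaximal := fun i => (e i).2
  have hMinj : Function.Injective M := fun i j hij => e.injective (Subtype.ext hij)
  have key : ∀ k, k ≤ n → ∃ x : ℕ → R,
      (∀ i < k, x i ∈ M i) ∧
      (∀ i j, i < j → j < k → x j - 1 ∈ Ideal.span {x i}) ∧
      (∀ i < k, ∀ j, i < j → j ≤ n → x i - 1 ∈ M j) := by
    intro k
    induction k with
    | zero =>
      exact fun _ => ⟨fun _ => 0, fun i hi => absurd hi (Nat.not_lt_zero i),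
        fun i j _ hj => absurd hj (Nat.not_lt_zero j),
        fun i hi => absurd hi (Nat.not_lt_zero i)⟩
    | succ k ih =>
      intro hk
      obtain ⟨x, h1, h2, h3⟩ := ih (Nat.le_of_succ_le hk)
      have hkn : k ≤ n := Nat.le_of_succ_le hk
      set A : Ideal R := ∏ i ∈ Finset.range k, Ideal.span {x i} with hA
      set B : Ideal R := ∏ j ∈ Finset.Ioc k n, M j with hB
      have hcopA : IsCoprime (M k) A := by
        refine IsCoprime.prod_right fun i hi => ?_
        rw [Ideal.isCoprime_iff_sup_eq, Ideal.eq_top_iff_one]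
        have hik : i < k := Finset.mem_range.mp hi
        have hm : x i - 1 ∈ M k := h3 i hik k hik hkn
        have h1eq : (1 : R) = -(x i - 1) + x i := by ring
        rw [h1eq]
        exact Submodule.add_mem_sup (neg_mem hm) (Ideal.mem_span_singleton_self _)
      have hcopB : IsCoprime (M k) B := by
        refine IsCoprime.prod_right fun j hj => ?_
        rw [Ideal.isCoprime_iff_sup_eq]
        refine (hMmax k).coprime_of_ne (hMmax j) fun hEq => ?_
        have := hMinj hEq
        have := (Finset.mem_Ioc.mp hj).1
        omega
      have hsup : M k ⊔ A * B = ⊤ :=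
        Ideal.isCoprime_iff_sup_eq.mp (hcopA.mul_right hcopB)
      rw [Ideal.eq_top_iff_one] at hsup
      obtain ⟨p, hp, q, hq, hpq⟩ := Submodule.mem_sup.mp hsup
      refine ⟨Function.update x k p, ?_, ?_, ?_⟩
      · intro i hi
        rcases Nat.lt_succ_iff_lt_or_eq.mp hi with hi | rfl
        · rw [Function.update_of_ne (Nat.ne_of_lt hi)]; exact h1 i hi
        · rw [Function.update_self]; exact hp
      · intro i j hij hj
        have hik : i < k := lt_of_lt_of_le hij (Nat.lt_succ_iff.mp hj)
        rw [Function.update_of_ne (Nat.ne_of_lt hik)]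
        rcases Nat.lt_succ_iff_lt_or_eq.mp hj with hj | rfl
        · rw [Function.update_of_ne (Nat.ne_of_lt hj)]; exact h2 i j hij hj
        · rw [Function.update_self]
          have : p - 1 = -q := by
            have : p + q = 1 := hpq
            linear_combination this
          rw [this]
          refine neg_mem (le_trans Ideal.mul_le_left ?_ hq)
          exact le_trans Ideal.prod_le_inf (Finset.inf_le (Finset.mem_range.mpr hik))
      · intro i hi j hij hjn
        rcases Nat.lt_succ_iff_lt_or_eq.mp hi with hi | rfl
        · rw [Function.update_of_ne (Nat.ne_of_lt hi)]
          exact h3 i hi j hij hjn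
        · rw [Function.update_self]
          have hpq' : p - 1 = -q := by linear_combination (hpq : p + q = 1)
          rw [hpq']
          refine neg_mem (le_trans Ideal.mul_le_right ?_ hq)
          exact le_trans Ideal.prod_le_inf (Finset.inf_le (Finset.mem_Ioc.mpr ⟨hij, hjn⟩))
  obtain ⟨x, h1, h2, h3⟩ := key n le_rfl
  -- basic facts
  have hnu : ∀ i < n, ¬IsUnit (x i) := by
    intro i hi hu
    exact (hMmax i).ne_top (Ideal.eq_top_of_isUnit_mem _ (h1 i hi) hu)
  have hnj : ∀ i < n, x i ∉ (⊥ : Ideal R).jacobson := by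
    intro i hi hmem
    have hxn : x i ∈ M n := Ideal.mem_sInf.mp hmem ⟨bot_le, hMmax n⟩
    have hx1 : x i - 1 ∈ M n := h3 i hi n hi le_rfl
    have : (1 : R) ∈ M n := by
      have h1eq : (1 : R) = x i - (x i - 1) := by ring
      rw [h1eq]; exact sub_mem hxn hx1
    exact (hMmax n).ne_top ((Ideal.eq_top_iff_one _).mpr this)
  have hadj : ∀ i j, i < j → j < n → Ideal.span {x i} ⊔ Ideal.span {x j} = ⊤ := by
    intro i j hij hj
    rw [Ideal.eq_top_iff_one]
    have h1eq : (1 : R) = -(x j - 1) + x j := by ring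
    rw [h1eq]
    exact Submodule.add_mem_sup (neg_mem (h2 i j hij hj)) (Ideal.mem_span_singleton_self _)
  have hne : ∀ i j, i < j → j < n → x i ≠ x j := by
    intro i j hij hj hEq
    have := hadj i j hij hj
    rw [hEq, sup_idem, Ideal.span_singleton_eq_top] at this
    exact hnu j hj this
  let v : Fin n → GammaVert R := fun i => ⟨x i, hnu i i.2, hnj i i.2⟩
  have hvinj : Function.Injective v := by
    intro a b hab
    have hx : x a = x b := congrArg Subtype.val hab
    by_contra hne'
    rcases lt_or_gt_of_ne (fun hEq : (a:ℕ) = (b:ℕ) => hne' (Fin.ext hEq)) with hlt | hlt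
    · exact hne a b hlt b.2 hx
    · exact hne b a hlt a.2 hx.symm
  refine ⟨Finset.univ.image v, ?_, ?_⟩
  · intro a ha b hb hab
    obtain ⟨i, -, rfl⟩ := Finset.mem_image.mp ha
    obtain ⟨j, -, rfl⟩ := Finset.mem_image.mp hb
    have hij : i ≠ j := fun hEq => hab (congrArg v hEq)
    refine ⟨hab, ?_⟩
    rcases lt_or_gt_of_ne (fun hEq : (i:ℕ) = (j:ℕ) => hij (Fin.ext hEq)) with hlt | hlt
    · exact hadj i j hlt j.2
    · rw [sup_comm]; exact hadj j i hlt i.2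
  · rw [Finset.card_image_of_injective _ hvinj, Finset.card_univ, Fintype.card_fin]
end

section
/- Let R be a commutative ring with identity and let G = Γ_r(R). Then the following are equivalent: (1) G has at least two vertices and there exists a vertex of G adjacent to every other vertex (G is a refinement of a star graph); (2) G is a star graph, i.e., G has at least two vertices, some vertex is adjacent to every other vertex, and the remaining vertices form an independent set; (3) R is isomorphic to F × T, where F is a field and T is a local ring. -/
universe u

section StarAux

open Ideal

variable {R' S' : Type*} [CommRing R'] [CommRing S']

lemma prodIsUnit {A B : Type*} [CommRing A] [CommRing B] {x : A × B} :
    IsUnit x ↔ IsUnit x.1 ∧ IsUnit x.2 := by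
  constructor
  · intro h
    obtain ⟨y, hy⟩ := isUnit_iff_exists_inv.mp h
    exact ⟨isUnit_iff_exists_inv.mpr ⟨y.1, congrArg Prod.fst hy⟩,
      isUnit_iff_exists_inv.mpr ⟨y.2, congrArg Prod.snd hy⟩⟩
  · rintro ⟨h1, h2⟩
    obtain ⟨y1, hy1⟩ := isUnit_iff_exists_inv.mp h1
    obtain ⟨y2, hy2⟩ := isUnit_iff_exists_inv.mp h2
    refine isUnit_iff_exists_inv.mpr ⟨(y1, y2), Prod.ext_iff.mpr ⟨?_, ?_⟩⟩ <;> simpa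

lemma jacMap (e : R' ≃+* S') {x : R'} (h : x ∈ Ideal.jacobson (⊥ : Ideal R')) :
    e x ∈ Ideal.jacobson (⊥ : Ideal S') := by
  rw [Ideal.mem_jacobson_bot] at h ⊢
  intro y
  have := (h (e.symm y)).map (e : R' →+* S')
  simpa using this

def vertMap (e : R' ≃+* S') (v : GammaRVert R') : GammaRVert S' :=
  ⟨Ideal.map (e : R' →+* S') v.1, by
    obtain ⟨x, h1, h2, h3⟩ := v.2
    refine ⟨e x, fun h => h1 (by simpa using h.map (e.symm : S' →+* R')),
      fun h => h2 (by simpa using jacMap e.symm h), ?_⟩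
    rw [h3, Ideal.map_span, Set.image_singleton]
    rfl⟩

lemma vertMap_coe (e : R' ≃+* S') (v : GammaRVert R') :
    (vertMap e v).1 = Ideal.map (e : R' →+* S') v.1 := rfl

lemma vertMap_vertMap (e : R' ≃+* S') (w : GammaRVert S') :
    vertMap e (vertMap e.symm w) = w := by
  apply Subtype.ext
  rw [vertMap_coe, vertMap_coe, Ideal.map_map,
    show ((e : R' →+* S').comp (e.symm : S' →+* R')) = RingHom.id S' from
      RingHom.ext fun x => e.apply_symm_apply x, Ideal.map_id]

lemma vertMap_vertMap' (e : R' ≃+* S') (v : GammaRVert R') :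
    vertMap e.symm (vertMap e v) = v := by
  have := vertMap_vertMap e.symm v
  rwa [RingEquiv.symm_symm] at this

lemma vertMap_adj (e : R' ≃+* S') {u v : GammaRVert R'} (h : (GammaR R').Adj u v) :
    (GammaR S').Adj (vertMap e u) (vertMap e v) := by
  obtain ⟨hne, hsup⟩ := h
  refine ⟨fun hEq => hne ?_, ?_⟩
  · have := congrArg (vertMap e.symm) hEq
    rwa [vertMap_vertMap', vertMap_vertMap'] at this
  · show Ideal.map _ u.1 ⊔ Ideal.map _ v.1 = ⊤
    rw [← Ideal.map_sup, hsup, Ideal.map_top]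

/-- The hard direction: a center of `Γ_r(R)` forces `R ≅ F × T`. -/
lemma star_to_prod (R : Type u) [CommRing R]
    (c : GammaRVert R) (hstar : ∀ v : GammaRVert R, v ≠ c → (GammaR R).Adj c v) :
    ∃ (F T : Type u) (_ : Field F) (_ : CommRing T),
      IsLocalRing T ∧ Nonempty (R ≃+* (F × T)) := by
  obtain ⟨c0, hcu, hcj, hcI⟩ := c.2
  haveI : Nontrivial R := by
    by_contra h
    rw [not_nontrivial_iff_subsingleton] at h
    exact hcu (isUnit_of_subsingleton c0)
  -- Step 1: `span {c0 * c0} = span {c0}`, giving an idempotent generator.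
  have h2j : c0 * c0 ∉ Ideal.jacobson (⊥ : Ideal R) := by
    intro h
    apply hcj
    rw [Ideal.jacobson, Ideal.mem_sInf] at h ⊢
    intro I hI
    exact ((hI.2.isPrime.mul_mem_iff_mem_or_mem).mp (h hI)).elim id id
  have h2u : ¬IsUnit (c0 * c0) := fun h => hcu (isUnit_of_mul_isUnit_left h)
  have h2le : Ideal.span {c0 * c0} ≤ Ideal.span {c0} :=
    Ideal.span_singleton_le_span_singleton.mpr ⟨c0, rfl⟩
  have hv2 : (⟨Ideal.span {c0 * c0}, c0 * c0, h2u, h2j, rfl⟩ : GammaRVert R) = c := by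
    by_contra hne
    obtain ⟨-, hsup⟩ := hstar _ hne
    rw [hcI] at hsup
    rw [sup_eq_left.mpr h2le] at hsup
    exact hcu (Ideal.span_singleton_eq_top.mp hsup)
  have hc_mem : c0 ∈ Ideal.span {c0 * c0} := by
    have := congrArg Subtype.val hv2
    simp only at this
    rw [this, hcI]
    exact Ideal.mem_span_singleton_self c0
  obtain ⟨t, ht⟩ := Ideal.mem_span_singleton'.mp hc_mem
  -- ht : t * (c0 * c0) = c0
  obtain ⟨e, he_def⟩ : ∃ e : R, e = t * c0 := ⟨_, rfl⟩
  have he2 : e * e = e := by rw [he_def]; linear_combination t * ht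
  have hce : c0 * e = c0 := by rw [he_def]; linear_combination ht
  have he_spanle : Ideal.span {e} ≤ Ideal.span {c0} :=
    Ideal.span_singleton_le_span_singleton.mpr ⟨t, by rw [he_def]; ring⟩
  have hspan_ce : Ideal.span {c0} = Ideal.span {e} := by
    apply le_antisymm _ he_spanle
    exact Ideal.span_singleton_le_span_singleton.mpr ⟨c0, by rw [mul_comm]; exact hce.symm⟩
  have he_nu : ¬IsUnit e := by
    intro h
    apply hcu
    apply Ideal.span_singleton_eq_top.mp
    rw [hspan_ce]
    exact Ideal.span_singleton_eq_top.mpr h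
  have he_j : e ∉ Ideal.jacobson (⊥ : Ideal R) := by
    intro h
    exact hcj (by rw [← hce]; exact Ideal.mul_mem_left _ c0 h)
  -- Step 2: `span {e}` is a maximal ideal.
  have hKey : ∀ x : R, x ∉ Ideal.span {e} → Ideal.span {e} ⊔ Ideal.span {x} = ⊤ := by
    intro x hx
    by_contra hne
    obtain ⟨z, hz_def⟩ : ∃ z : R, z = e + x - x * e := ⟨_, rfl⟩
    have hsupz : Ideal.span {e} ⊔ Ideal.span {z} = Ideal.span {e} ⊔ Ideal.span {x} := by
      apply le_antisymm
      · refine sup_le le_sup_left ?_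
        rw [Ideal.span_le, Set.singleton_subset_iff]
        exact Submodule.mem_sup.mpr ⟨e, Ideal.mem_span_singleton_self e,
          x - x * e, Ideal.mem_span_singleton'.mpr ⟨1 - e, by ring⟩, by
            rw [hz_def]; ring⟩
      · refine sup_le le_sup_left ?_
        rw [Ideal.span_le, Set.singleton_subset_iff]
        exact Submodule.mem_sup.mpr ⟨e * (x - 1),
          Ideal.mem_span_singleton'.mpr ⟨x - 1, by ring⟩,
          z, Ideal.mem_span_singleton_self z, by rw [hz_def]; ring⟩
    have hz_nu : ¬IsUnit z := by
      intro h
      apply hne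
      rw [← hsupz, Ideal.span_singleton_eq_top.mpr h, sup_top_eq]
    have hze : z * e = e := by
      rw [hz_def]; linear_combination (1 - x) * he2
    have hz_j : z ∉ Ideal.jacobson (⊥ : Ideal R) := by
      intro h
      exact he_j (by rw [← hze]; exact Ideal.mul_mem_right _ _ h)
    have hvz_ne : (⟨Ideal.span {z}, z, hz_nu, hz_j, rfl⟩ : GammaRVert R) ≠ c := by
      intro hEq
      apply hx
      have hIz : Ideal.span {z} = Ideal.span {e} := by
        have := congrArg Subtype.val hEq
        simp only at this
        rw [this, hcI, hspan_ce]
      have hz_mem : z ∈ Ideal.span {e} := by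
        rw [← hIz]; exact Ideal.mem_span_singleton_self z
      obtain ⟨s, hs⟩ := Ideal.mem_span_singleton'.mp hz_mem
      -- hs : s * e = z
      have h0 : x - x * e = 0 := by
        have h1 : z * (1 - e) = x - x * e := by
          rw [hz_def]; linear_combination (x - 1) * he2
        have h2 : z * (1 - e) = 0 := by
          rw [← hs]; linear_combination (-s) * he2
        rw [← h1, h2]
      exact Ideal.mem_span_singleton'.mpr ⟨x, by linear_combination (-1 : R) * h0⟩
    obtain ⟨-, hsup⟩ := hstar _ hvz_ne
    rw [hcI, hspan_ce] at hsup
    rw [hsupz] at hsup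
    exact hne hsup
  have hmax : (Ideal.span {e} : Ideal R).IsMaximal := by
    rw [Ideal.isMaximal_iff]
    constructor
    · intro h1
      exact he_nu (Ideal.span_singleton_eq_top.mp ((Ideal.eq_top_iff_one _).mpr h1))
    · intro J x hIJ hxI hxJ
      have := hKey x hxI
      have hle : Ideal.span {e} ⊔ Ideal.span {x} ≤ J := by
        refine sup_le hIJ ?_
        rw [Ideal.span_le, Set.singleton_subset_iff]
        exact hxJ
      rw [this] at hle
      exact hle trivial
  -- Step 3: `R ⧸ span {1 - e}` is local.
  have h1e_nu : ¬IsUnit (1 - e) := by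
    intro h
    obtain ⟨s, hs⟩ := isUnit_iff_exists_inv.mp h
    have he0 : e = 0 := by linear_combination (-e) * hs + (-s) * he2
    apply hcj
    rw [← hce, he0, mul_zero]
    exact Submodule.zero_mem _
  have hI_ne_top : Ideal.span {(1 : R) - e} ≠ ⊤ := fun h =>
    h1e_nu (Ideal.span_singleton_eq_top.mp h)
  haveI hTnt : Nontrivial (R ⧸ Ideal.span {(1 : R) - e}) := Ideal.Quotient.nontrivial_iff.mpr hI_ne_top
  have hmk_e : Ideal.Quotient.mk (Ideal.span {(1 : R) - e}) e = 1 := by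
    rw [← _root_.map_one (Ideal.Quotient.mk (Ideal.span {(1 : R) - e})),
      Ideal.Quotient.mk_eq_mk_iff_sub_mem]
    exact Ideal.mem_span_singleton'.mpr ⟨-1, by ring⟩
  have hquot_jac : ∀ y : R ⧸ Ideal.span {(1 : R) - e},
      ¬IsUnit y → y ∈ Ideal.jacobson (⊥ : Ideal (R ⧸ Ideal.span {(1 : R) - e})) := by
    set I : Ideal R := Ideal.span {(1 : R) - e} with hI_def
    intro y hy
    by_contra hyj
    obtain ⟨x, rfl⟩ := Ideal.Quotient.mk_surjective y
    set w : R := x * e with hw_def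
    have hmkw : Ideal.Quotient.mk I w = Ideal.Quotient.mk I x := by
      rw [hw_def, _root_.map_mul, hmk_e, mul_one]
    have hw_nu : ¬IsUnit w := by
      intro h
      apply hy
      rw [← hmkw]
      exact h.map (Ideal.Quotient.mk I)
    have hw_j : w ∉ Ideal.jacobson (⊥ : Ideal R) := by
      intro h
      apply hyj
      rw [Ideal.mem_jacobson_bot] at h
      rw [Ideal.mem_jacobson_bot]
      intro u
      obtain ⟨u', rfl⟩ := Ideal.Quotient.mk_surjective u
      have := (h u').map (Ideal.Quotient.mk I)
      rw [_root_.map_add, _root_.map_mul, _root_.map_one, hmkw] at this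
      exact this
    have hvw_ne : (⟨Ideal.span {w}, w, hw_nu, hw_j, rfl⟩ : GammaRVert R) ≠ c := by
      intro hEq
      apply hy
      have hIw : Ideal.span {w} = Ideal.span {e} := by
        have := congrArg Subtype.val hEq
        simp only at this
        rw [this, hcI, hspan_ce]
      have he_mem : e ∈ Ideal.span {w} := by
        rw [hIw]; exact Ideal.mem_span_singleton_self e
      obtain ⟨s, hs⟩ := Ideal.mem_span_singleton'.mp he_mem
      -- hs : s * w = e
      refine isUnit_iff_exists_inv.mpr ⟨Ideal.Quotient.mk I (s * e), ?_⟩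
      have := congrArg (Ideal.Quotient.mk I) hs
      rw [hw_def] at this
      calc Ideal.Quotient.mk I x * Ideal.Quotient.mk I (s * e)
          = Ideal.Quotient.mk I (s * (x * e)) := by
            rw [← _root_.map_mul]; exact congrArg _ (by ring)
      _ = Ideal.Quotient.mk I e := this
      _ = 1 := hmk_e
    obtain ⟨-, hsup⟩ := hstar _ hvw_ne
    rw [hcI, hspan_ce] at hsup
    obtain ⟨p, hp, q, hq, hpq⟩ := Submodule.mem_sup.mp
      ((Ideal.eq_top_iff_one _).mp hsup)
    obtain ⟨p', hp'⟩ := Ideal.mem_span_singleton'.mp hp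
    obtain ⟨q', hq'⟩ := Ideal.mem_span_singleton'.mp hq
    apply he_nu
    refine isUnit_iff_exists_inv.mpr ⟨p' + q' * x, ?_⟩
    rw [hw_def] at hq'
    linear_combination hpq + hp' + hq'
  have hlocal : IsLocalRing (R ⧸ Ideal.span {(1 : R) - e}) := by
    apply IsLocalRing.of_nonunits_add
    intro a b ha hb
    rw [mem_nonunits_iff] at ha hb ⊢
    intro hu
    have hmem : a + b ∈ Ideal.jacobson (⊥ : Ideal (R ⧸ Ideal.span {(1 : R) - e})) :=
      Ideal.add_mem _ (hquot_jac a ha) (hquot_jac b hb)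
    rw [Ideal.mem_jacobson_bot] at hmem
    obtain ⟨v, hv⟩ := isUnit_iff_exists_inv.mp hu
    have := hmem (-v)
    rw [show (a + b) * (-v) + 1 = -((a+b)*v - 1) by ring, hv, sub_self, neg_zero] at this
    exact not_isUnit_zero this
  -- Step 4: assemble the isomorphism.
  have hbot : (⊥ : Ideal R) = Ideal.span {e} ⊓ Ideal.span {(1 : R) - e} := by
    apply le_antisymm bot_le
    intro x hx
    obtain ⟨hx1, hx2⟩ := Submodule.mem_inf.mp hx
    obtain ⟨a, ha⟩ := Ideal.mem_span_singleton'.mp hx1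
    obtain ⟨b, hb⟩ := Ideal.mem_span_singleton'.mp hx2
    have h1 : x * e = x := by rw [← ha]; linear_combination a * he2
    have h2 : x * e = 0 := by rw [← hb]; linear_combination (-b) * he2
    rw [Submodule.mem_bot, ← h1, h2]
  have hcop : IsCoprime (Ideal.span {e}) (Ideal.span {(1 : R) - e}) := by
    rw [Ideal.isCoprime_iff_sup_eq, Ideal.eq_top_iff_one]
    exact Submodule.mem_sup.mpr ⟨e, Ideal.mem_span_singleton_self e,
      1 - e, Ideal.mem_span_singleton_self _, by ring⟩
  haveI := hmax
  refine ⟨R ⧸ Ideal.span {e}, R ⧸ Ideal.span {(1 : R) - e},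
    Ideal.Quotient.field _, inferInstance, hlocal, ⟨?_⟩⟩
  exact (RingEquiv.quotientBot R).symm.trans
    ((Ideal.quotEquivOfEq hbot).trans
      (Ideal.quotientInfEquivQuotientProd _ _ hcop))

/-- The easy direction: `Γ_r(F × T)` is a star. -/
lemma prod_to_star (R : Type u) [CommRing R]
    (F T : Type u) [Field F] [CommRing T] (hT : IsLocalRing T) (e : R ≃+* (F × T)) :
    ∃ c : GammaRVert R, (∃ v : GammaRVert R, v ≠ c) ∧
      (∀ v : GammaRVert R, v ≠ c → (GammaR R).Adj c v) ∧
      ∀ u v : GammaRVert R, u ≠ c → v ≠ c → ¬(GammaR R).Adj u v := by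
  haveI : Nontrivial T := hT.toNontrivial
  have h01_nu : ¬IsUnit ((0, 1) : F × T) := fun h => not_isUnit_zero (prodIsUnit.mp h).1
  have h01_j : ((0, 1) : F × T) ∉ Ideal.jacobson (⊥ : Ideal (F × T)) := by
    intro h
    have := Ideal.mem_jacobson_bot.mp h ((0 : F), (-1 : T))
    have h2 := (prodIsUnit.mp this).2
    simp at h2
  have h10_nu : ¬IsUnit ((1, 0) : F × T) := fun h => not_isUnit_zero (prodIsUnit.mp h).2
  have h10_j : ((1, 0) : F × T) ∉ Ideal.jacobson (⊥ : Ideal (F × T)) := by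
    intro h
    have := Ideal.mem_jacobson_bot.mp h ((-1 : F), (0 : T))
    have h2 := (prodIsUnit.mp this).1
    simp at h2
  refine ?_
  set cS : GammaRVert (F × T) := ⟨Ideal.span {((0 : F), (1 : T))}, (0, 1), h01_nu, h01_j, rfl⟩
    with hcS_def
  set vS : GammaRVert (F × T) := ⟨Ideal.span {((1 : F), (0 : T))}, (1, 0), h10_nu, h10_j, rfl⟩
    with hvS_def
  have hvS_ne : vS ≠ cS := by
    intro h
    have hids : Ideal.span {((1 : F), (0 : T))} = Ideal.span {((0 : F), (1 : T))} :=
      congrArg Subtype.val h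
    have h1 : ((1 : F), (0 : T)) ∈ Ideal.span {((0 : F), (1 : T))} := by
      rw [← hids]; exact Ideal.mem_span_singleton_self _
    obtain ⟨b, hb⟩ := Ideal.mem_span_singleton'.mp h1
    have := congrArg Prod.fst hb
    simp at this
  -- classification of generators of non-center vertices
  have hclass : ∀ v : GammaRVert (F × T), v ≠ cS → ∀ x : F × T,
      ¬IsUnit x → x ∉ Ideal.jacobson (⊥ : Ideal (F × T)) → v.1 = Ideal.span {x} →
      IsUnit x.1 ∧ ¬IsUnit x.2 := by
    intro v hv x hxu hxj hxI
    have hx2 : ¬IsUnit x.2 := by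
      intro h2
      have hx1 : x.1 = 0 := by
        by_contra h1
        exact hxu (prodIsUnit.mpr ⟨isUnit_iff_ne_zero.mpr h1, h2⟩)
      apply hv
      apply Subtype.ext
      rw [hxI]
      show Ideal.span {x} = Ideal.span {((0 : F), (1 : T))}
      obtain ⟨u2, hu2⟩ := h2
      apply le_antisymm
      · rw [Ideal.span_le, Set.singleton_subset_iff]
        refine Ideal.mem_span_singleton'.mpr ⟨((0 : F), x.2), ?_⟩
        refine Prod.ext_iff.mpr ⟨?_, ?_⟩ <;> simp [hx1]
      · rw [Ideal.span_le, Set.singleton_subset_iff]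
        refine Ideal.mem_span_singleton'.mpr ⟨((0 : F), ((u2⁻¹ : Tˣ) : T)), ?_⟩
        refine Prod.ext_iff.mpr ⟨?_, ?_⟩ <;> simp [hx1, ← hu2]
    refine ⟨?_, hx2⟩
    rw [isUnit_iff_ne_zero]
    intro h1
    apply hxj
    rw [Ideal.mem_jacobson_bot]
    intro y
    refine prodIsUnit.mpr ⟨?_, ?_⟩
    · have h : (x * y + 1).1 = 1 := by simp [h1]
      rw [h]; exact isUnit_one
    · have h : (x * y + 1).2 = x.2 * y.2 + 1 := by simp
      rw [h]
      have hx2m : x.2 ∈ Ideal.jacobson (⊥ : Ideal T) := by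
        rw [IsLocalRing.jacobson_eq_maximalIdeal ⊥ bot_ne_top]
        exact hx2
      exact Ideal.mem_jacobson_bot.mp hx2m y.2
  have hadjS : ∀ v : GammaRVert (F × T), v ≠ cS → (GammaR (F × T)).Adj cS v := by
    intro v hv
    obtain ⟨x, hxu, hxj, hxI⟩ := v.2
    obtain ⟨h1, h2⟩ := hclass v hv x hxu hxj hxI
    refine ⟨hv.symm, ?_⟩
    show Ideal.span {((0 : F), (1 : T))} ⊔ v.1 = ⊤
    rw [hxI, Ideal.eq_top_iff_one]
    obtain ⟨u1, hu1⟩ := h1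
    refine Submodule.mem_sup.mpr ⟨((0 : F), (1 : T)), Ideal.mem_span_singleton_self _,
      ((1 : F), (0 : T)), Ideal.mem_span_singleton'.mpr ⟨(((u1⁻¹ : Fˣ) : F), (0 : T)), ?_⟩, ?_⟩
    · refine Prod.ext_iff.mpr ⟨?_, ?_⟩ <;> simp [← hu1]
    · refine Prod.ext_iff.mpr ⟨?_, ?_⟩ <;> simp
  have hindS : ∀ u v : GammaRVert (F × T), u ≠ cS → v ≠ cS → ¬(GammaR (F × T)).Adj u v := by
    intro u v hu hv hadj
    obtain ⟨-, hsup⟩ := hadj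
    obtain ⟨x, hxu, hxj, hxI⟩ := u.2
    obtain ⟨y, hyu, hyj, hyI⟩ := v.2
    obtain ⟨-, hx2⟩ := hclass u hu x hxu hxj hxI
    obtain ⟨-, hy2⟩ := hclass v hv y hyu hyj hyI
    have hsup' : Ideal.span {x} ⊔ Ideal.span {y} = ⊤ := by
      rw [← hxI, ← hyI]; exact hsup
    obtain ⟨p, hp, q, hq, hpq⟩ := Submodule.mem_sup.mp ((Ideal.eq_top_iff_one _).mp hsup')
    obtain ⟨a, ha⟩ := Ideal.mem_span_singleton'.mp hp
    obtain ⟨b, hb⟩ := Ideal.mem_span_singleton'.mp hq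
    have h2 : a.2 * x.2 + b.2 * y.2 = 1 := by
      have := congrArg Prod.snd hpq
      rw [← ha, ← hb] at this
      simpa using this
    have hmem : (1 : T) ∈ IsLocalRing.maximalIdeal T := by
      rw [← h2]
      exact Ideal.add_mem _
        (Ideal.mul_mem_left _ _ ((IsLocalRing.mem_maximalIdeal _).mpr hx2))
        (Ideal.mul_mem_left _ _ ((IsLocalRing.mem_maximalIdeal _).mpr hy2))
    exact (IsLocalRing.mem_maximalIdeal _).mp hmem isUnit_one
  -- transport to R
  refine ⟨vertMap e.symm cS, ⟨vertMap e.symm vS, ?_⟩, ?_, ?_⟩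
  · intro h
    apply hvS_ne
    have := congrArg (vertMap e) h
    rwa [vertMap_vertMap, vertMap_vertMap] at this
  · intro v hv
    have hne : vertMap e v ≠ cS := by
      intro h
      apply hv
      have := congrArg (vertMap e.symm) h
      rwa [vertMap_vertMap'] at this
    have := vertMap_adj e.symm (hadjS _ hne)
    rwa [vertMap_vertMap'] at this
  · intro u v hu hv hadj
    have hneu : vertMap e u ≠ cS := by
      intro h
      apply hu
      have := congrArg (vertMap e.symm) h
      rwa [vertMap_vertMap'] at this
    have hnev : vertMap e v ≠ cS := by
      intro h
      apply hv
      have := congrArg (vertMap e.symm) h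
      rwa [vertMap_vertMap'] at this
    exact hindS _ _ hneu hnev (vertMap_adj e hadj)

end StarAux

/-- Proposition 4.6: for `G = Γ_r(R)`, `G` is a refinement of a star graph iff it is a
star graph, iff `R ≅ F × T` with `F` a field and `T` a local ring. -/
theorem gammaR_star_tfae (R : Type u) [CommRing R] :
    (((∃ a b : GammaRVert R, a ≠ b) ∧
        ∃ c : GammaRVert R, ∀ v : GammaRVert R, v ≠ c → (GammaR R).Adj c v) ↔
      (∃ c : GammaRVert R, (∃ v : GammaRVert R, v ≠ c) ∧
        (∀ v : GammaRVert R, v ≠ c → (GammaR R).Adj c v) ∧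
        ∀ u v : GammaRVert R, u ≠ c → v ≠ c → ¬(GammaR R).Adj u v)) ∧
    ((∃ c : GammaRVert R, (∃ v : GammaRVert R, v ≠ c) ∧
        (∀ v : GammaRVert R, v ≠ c → (GammaR R).Adj c v) ∧
        ∀ u v : GammaRVert R, u ≠ c → v ≠ c → ¬(GammaR R).Adj u v) ↔
      (∃ (F T : Type u) (_ : Field F) (_ : CommRing T),
        IsLocalRing T ∧ Nonempty (R ≃+* (F × T)))) := by
  constructor
  · constructor
    · rintro ⟨-, c, hc⟩
      obtain ⟨F, T, hF, hTc, hT, ⟨e⟩⟩ := star_to_prod R c hc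
      exact prod_to_star R F T hT e
    · rintro ⟨c, ⟨v, hv⟩, hadj, -⟩
      exact ⟨⟨v, c, hv⟩, c, hadj⟩
  · constructor
    · rintro ⟨c, -, hadj, -⟩
      exact star_to_prod R c hadj
    · rintro ⟨F, T, hF, hTc, hT, ⟨e⟩⟩
      exact prod_to_star R F T hT e
end

section
/- Let R be a commutative ring with identity that is not a local ring. Then the graph Γ_r(R) has diameter one (i.e., Γ_r(R) has at least two vertices and any two distinct vertices are adjacent) if and only if R is isomorphic to F₁ × F₂ for some fields F₁ and F₂. -/
universe u

lemma key {R : Type u} [CommRing R] [Nontrivial R]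
    (hadj : ∀ a b : GammaRVert R, a ≠ b → (GammaR R).Adj a b)
    {e : R} (he : e * e = e) (h0 : e ≠ 0) (h1 : e ≠ 1) :
    (Ideal.span {e}).IsMaximal := by
  set f := 1 - e with hf
  have hef : e * f = 0 := by rw [hf]; linear_combination -he
  have hff : f * f = f := by rw [hf]; linear_combination he
  have hefs : e + f = 1 := by rw [hf]; ring
  have hEnotUnit : ¬IsUnit e := by
    intro hu
    obtain ⟨c, hc⟩ := hu.exists_left_inv
    exact h1 (by
      calc e = (c * e) * e := by rw [hc, one_mul]
        _ = c * (e * e) := by ring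
        _ = c * e := by rw [he]
        _ = 1 := hc)
  have hFnotUnit : ¬IsUnit f := by
    rintro hu
    have : e = 0 := by
      obtain ⟨c, hc⟩ := hu.exists_left_inv
      calc e = (c * f) * e := by rw [hc, one_mul]
        _ = c * (e * f) := by ring
        _ = 0 := by rw [hef, mul_zero]
    exact h0 this
  obtain ⟨m', hm', hfm'⟩ := Ideal.exists_le_maximal (Ideal.span {f})
    (by rwa [Ne, Ideal.span_singleton_eq_top])
  have hfmem' : f ∈ m' := hfm' (Ideal.mem_span_singleton_self f)
  have hem' : e ∉ m' := by
    intro hmem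
    exact hm'.ne_top (Ideal.eq_top_of_isUnit_mem _ (by
      have : e + f ∈ m' := m'.add_mem hmem hfmem'
      rwa [hefs] at this) isUnit_one)
  have hJle : (⊥ : Ideal R).jacobson ≤ m' := sInf_le ⟨bot_le, hm'⟩
  have heJ : e ∉ (⊥ : Ideal R).jacobson := fun hmem => hem' (hJle hmem)
  obtain ⟨m, hm, hem⟩ := Ideal.exists_le_maximal (Ideal.span {e})
    (by rwa [Ne, Ideal.span_singleton_eq_top])
  have hemem : e ∈ m := hem (Ideal.mem_span_singleton_self e)
  have hmle : m ≤ Ideal.span {e} := by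
    intro t ht
    set w := e + t * f with hw
    have hwm : w ∈ m := m.add_mem hemem (m.mul_mem_right f ht)
    have hwNotUnit : ¬IsUnit w := fun hu => hm.ne_top (Ideal.eq_top_of_isUnit_mem _ hwm hu)
    have hwJ : w ∉ (⊥ : Ideal R).jacobson := by
      intro hmem
      have : w ∈ m' := hJle hmem
      have : e ∈ m' := by
        have h2 : t * f ∈ m' := m'.mul_mem_left t hfmem'
        have := m'.sub_mem this h2
        simpa [hw] using this
      exact hem' this
    have hspan : Ideal.span {w} = Ideal.span {e} := by
      by_contra hne
      have hAdj := hadj ⟨Ideal.span {w}, w, hwNotUnit, hwJ, rfl⟩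
        ⟨Ideal.span {e}, e, hEnotUnit, heJ, rfl⟩
        (fun hh => hne (congrArg Subtype.val hh))
      obtain ⟨-, htop⟩ := hAdj
      have : (⊤ : Ideal R) ≤ m := htop ▸ sup_le
        (Ideal.span_le.2 (by simpa using hwm)) hem
      exact hm.ne_top (top_le_iff.mp this)
    have hwmem : w ∈ Ideal.span {e} := hspan ▸ Ideal.mem_span_singleton_self w
    have htf : t * f ∈ Ideal.span {e} := by
      have := Ideal.sub_mem _ hwmem (Ideal.mem_span_singleton_self e)
      simpa [hw] using this
    obtain ⟨c, hc⟩ := Ideal.mem_span_singleton'.1 htf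
    have htf0 : t * f = 0 := by
      calc t * f = t * f * f := by rw [mul_assoc, hff]
        _ = c * e * f := by rw [hc]
        _ = c * (e * f) := by ring
        _ = 0 := by rw [hef, mul_zero]
    have : t = t * e := by
      have := congrArg (fun z => t * z) hefs
      simp only [mul_add, mul_one] at this
      rw [htf0, add_zero] at this
      exact this.symm
    rw [this]
    exact Ideal.mem_span_singleton'.2 ⟨t, rfl⟩
  have : m = Ideal.span {e} := le_antisymm hmle hem
  exact this ▸ hm

lemma span_eq_of_unit_mul {R : Type u} [CommRing R] {u x y : R} (hu : IsUnit u)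
    (hxy : x = u * y) : Ideal.span {x} = Ideal.span {y} := by
  obtain ⟨v, hv⟩ := hu.exists_left_inv
  apply le_antisymm
  · exact Ideal.span_singleton_le_span_singleton.2 ⟨u, by rw [hxy, mul_comm]⟩
  · refine Ideal.span_singleton_le_span_singleton.2 ⟨v, ?_⟩
    calc y = (v * u) * y := by rw [hv, one_mul]
      _ = v * (u * y) := by ring
      _ = x * v := by rw [← hxy, mul_comm]


/-- Corollary 4.7: for a non-local commutative ring `R`, the diameter of `Γ_r(R)` is one
(it has at least two vertices and any two distinct vertices are adjacent) iff
`R ≅ F₁ × F₂` for some fields `F₁`, `F₂`. -/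
theorem gammaR_diam_one_iff (R : Type u) [CommRing R] [Nontrivial R]
    (h : ¬IsLocalRing R) :
    ((∃ a b : GammaRVert R, a ≠ b) ∧
      ∀ a b : GammaRVert R, a ≠ b → (GammaR R).Adj a b) ↔
    (∃ (F₁ F₂ : Type u) (_ : Field F₁) (_ : Field F₂),
      Nonempty (R ≃+* (F₁ × F₂))) := by
  constructor
  · rintro ⟨-, hadj⟩
    obtain ⟨m₁, hm₁⟩ := Ideal.exists_maximal R
    have hm2ex : ∃ m₂ : Ideal R, m₂.IsMaximal ∧ m₂ ≠ m₁ := by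
      by_contra hno
      push_neg at hno
      exact h (IsLocalRing.of_unique_max_ideal ⟨m₁, hm₁, fun I hI => hno I hI⟩)
    obtain ⟨m₂, hm₂, hne⟩ := hm2ex
    have hnotle : ¬(m₁ ≤ m₂) := fun hle => hne (hm₁.eq_of_le hm₂.ne_top hle).symm
    obtain ⟨x₀, hx₁, hx₂⟩ := SetLike.not_le_iff_exists.1 hnotle
    have hJ2 : (⊥ : Ideal R).jacobson ≤ m₂ := sInf_le ⟨bot_le, hm₂⟩
    have hxu : ¬IsUnit x₀ := fun hu => hm₁.ne_top (Ideal.eq_top_of_isUnit_mem _ hx₁ hu)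
    have hxJ : x₀ ∉ (⊥ : Ideal R).jacobson := fun hmem => hx₂ (hJ2 hmem)
    have hx2m2 : x₀ * x₀ ∉ m₂ := fun hmem => hx₂ ((hm₂.isPrime.mem_or_mem hmem).elim id id)
    have hx2u : ¬IsUnit (x₀ * x₀) := fun hu =>
      hm₁.ne_top (Ideal.eq_top_of_isUnit_mem _ (m₁.mul_mem_left x₀ hx₁) hu)
    have hx2J : x₀ * x₀ ∉ (⊥ : Ideal R).jacobson := fun hmem => hx2m2 (hJ2 hmem)
    have hspan : Ideal.span {x₀} = Ideal.span {x₀ * x₀} := by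
      by_contra hne2
      obtain ⟨-, htop⟩ := hadj ⟨Ideal.span {x₀}, x₀, hxu, hxJ, rfl⟩
        ⟨Ideal.span {x₀ * x₀}, x₀ * x₀, hx2u, hx2J, rfl⟩
        (fun hh => hne2 (congrArg Subtype.val hh))
      have hle : (⊤ : Ideal R) ≤ m₁ := htop ▸ sup_le
        (Ideal.span_le.2 (by simpa using hx₁))
        (Ideal.span_le.2 (by simpa using m₁.mul_mem_left x₀ hx₁))
      exact hm₁.ne_top (top_le_iff.mp hle)
    obtain ⟨c, hc⟩ := Ideal.mem_span_singleton'.1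
      (hspan ▸ Ideal.mem_span_singleton_self x₀)
    -- hc : c * (x₀ * x₀) = x₀
    set e := c * x₀ with hedef
    have he : e * e = e := by rw [hedef]; linear_combination c * hc
    have hex : e * x₀ = x₀ := by rw [hedef]; linear_combination hc
    have h0 : e ≠ 0 := by
      intro h0
      rw [h0, zero_mul] at hex
      exact hx₂ (hex ▸ m₂.zero_mem)
    have hem₁ : e ∈ m₁ := m₁.mul_mem_left c hx₁
    have h1 : e ≠ 1 := by
      intro h1
      exact hm₁.ne_top (Ideal.eq_top_of_isUnit_mem _ (h1 ▸ hem₁) isUnit_one)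
    set f := 1 - e with hfdef
    have hff : f * f = f := by rw [hfdef]; linear_combination he
    have hf0 : f ≠ 0 := fun hf0 => h1 (by rw [hfdef] at hf0; linear_combination -hf0)
    have hf1 : f ≠ 1 := fun hf1 => h0 (by rw [hfdef] at hf1; linear_combination -hf1)
    have hmaxE := key hadj he h0 h1
    have hmaxF := key hadj hff hf0 hf1
    have hefs : e + f = 1 := by rw [hfdef]; ring
    have hef : e * f = 0 := by rw [hfdef]; linear_combination -he
    have hcop : IsCoprime (Ideal.span {e}) (Ideal.span {f}) := by
      rw [Ideal.isCoprime_iff_sup_eq, Ideal.eq_top_iff_one]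
      exact Submodule.mem_sup.2 ⟨e, Ideal.mem_span_singleton_self e,
        f, Ideal.mem_span_singleton_self f, hefs⟩
    have hinf : Ideal.span {e} ⊓ Ideal.span {f} = ⊥ := by
      refine le_antisymm ?_ bot_le
      intro x hx
      obtain ⟨hxe, hxf⟩ := Submodule.mem_inf.1 hx
      obtain ⟨a, ha⟩ := Ideal.mem_span_singleton'.1 hxe
      obtain ⟨b, hb⟩ := Ideal.mem_span_singleton'.1 hxf
      have h5 : x * e = b * (e * f) := by rw [← hb]; ring
      have h6 : x * f = a * (e * f) := by rw [← ha]; ring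
      have : x = 0 := by
        calc x = x * e + x * f := by rw [← mul_add, hefs, mul_one]
          _ = b * (e * f) + a * (e * f) := by rw [h5, h6]
          _ = 0 := by rw [hef]; ring
      simpa using this
    letI : Field (R ⧸ Ideal.span {e}) := Ideal.Quotient.field _
    letI : Field (R ⧸ Ideal.span {f}) := Ideal.Quotient.field _
    refine ⟨R ⧸ Ideal.span {e}, R ⧸ Ideal.span {f}, inferInstance, inferInstance, ⟨?_⟩⟩
    exact (RingEquiv.quotientBot R).symm.trans
      ((Ideal.quotEquivOfEq hinf.symm).trans
        (Ideal.quotientInfEquivQuotientProd _ _ hcop))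
  · rintro ⟨F₁, F₂, hf1, hf2, ⟨g⟩⟩
    letI := hf1; letI := hf2
    set x₁ := g.symm (1, 0) with hx1def
    set x₂ := g.symm (0, 1) with hx2def
    have hgx₁ : g x₁ = (1, 0) := g.apply_symm_apply _
    have hgx₂ : g x₂ = (0, 1) := g.apply_symm_apply _
    have hnu : ∀ (p : F₁) (q : F₂), ¬IsUnit (g.symm (p, 0)) ∧ ¬IsUnit (g.symm (0, q)) := by
      intro p q
      constructor
      · intro hu
        have := hu.map g
        rw [g.apply_symm_apply] at this
        obtain ⟨w, hw⟩ := isUnit_iff_exists_inv.1 this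
        have := congrArg Prod.snd hw
        simpa using this
      · intro hu
        have := hu.map g
        rw [g.apply_symm_apply] at this
        obtain ⟨w, hw⟩ := isUnit_iff_exists_inv.1 this
        have := congrArg Prod.fst hw
        simpa using this
    have hu1 : ¬IsUnit x₁ := by
      have := (hnu 1 0).1; simpa [hx1def] using this
    have hu2 : ¬IsUnit x₂ := by
      have := (hnu 0 1).2; simpa [hx2def] using this
    have hJ1 : x₁ ∉ (⊥ : Ideal R).jacobson := by
      intro hmem
      have hU := Ideal.mem_jacobson_bot.1 hmem (-1)
      have hval : x₁ * -1 + 1 = g.symm (0, 1) := by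
        apply g.injective
        rw [map_add, map_mul, map_neg, map_one, hgx₁, g.apply_symm_apply]
        ext <;> simp
      rw [hval] at hU
      exact (hnu 0 1).2 hU
    have hJ2 : x₂ ∉ (⊥ : Ideal R).jacobson := by
      intro hmem
      have hU := Ideal.mem_jacobson_bot.1 hmem (-1)
      have hval : x₂ * -1 + 1 = g.symm (1, 0) := by
        apply g.injective
        rw [map_add, map_mul, map_neg, map_one, hgx₂, g.apply_symm_apply]
        ext <;> simp
      rw [hval] at hU
      exact (hnu 1 0).1 hU
    have hspanne : Ideal.span {x₁} ≠ Ideal.span {x₂} := by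
      intro heq
      obtain ⟨d, hd⟩ := Ideal.mem_span_singleton'.1
        (heq ▸ Ideal.mem_span_singleton_self x₁)
      have := congrArg (fun z => (g z).1) hd
      simp only [map_mul, hgx₂, hgx₁] at this
      simpa using this
    -- classification of vertices
    have hclass : ∀ x : R, ¬IsUnit x → x ∉ (⊥ : Ideal R).jacobson →
        Ideal.span {x} = Ideal.span {x₁} ∨ Ideal.span {x} = Ideal.span {x₂} := by
      intro x hxu hxJ
      have hx0 : x ≠ 0 := fun h0 => hxJ (h0 ▸ Submodule.zero_mem _)
      set p := (g x).1 with hp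
      set q := (g x).2 with hq
      have hnotboth : ¬(IsUnit p ∧ IsUnit q) := by
        rintro ⟨hup, huq⟩
        apply hxu
        obtain ⟨p', hp'⟩ := isUnit_iff_exists_inv.1 hup
        obtain ⟨q', hq'⟩ := isUnit_iff_exists_inv.1 huq
        refine isUnit_iff_exists_inv.2 ⟨g.symm (p', q'), ?_⟩
        apply g.injective
        rw [map_mul, map_one, g.apply_symm_apply]
        ext
        · simpa using hp'
        · simpa using hq'
      have hnotbothzero : ¬(p = 0 ∧ q = 0) := by
        rintro ⟨hp0, hq0⟩
        apply hx0
        apply g.injective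
        rw [map_zero]
        ext
        · simpa using hp0
        · simpa using hq0
      rcases eq_or_ne p 0 with hp0 | hp0
      · -- p = 0, q ≠ 0 : span x = span x₂
        have hq0 : q ≠ 0 := fun hq0 => hnotbothzero ⟨hp0, hq0⟩
        right
        have hxeq : x = g.symm (1, q) * x₂ := by
          apply g.injective
          rw [map_mul, g.apply_symm_apply, hgx₂]
          ext
          · simpa using hp0
          · simp [hq]
        refine span_eq_of_unit_mul ?_ hxeq
        refine isUnit_iff_exists_inv.2 ⟨g.symm (1, q⁻¹), ?_⟩
        apply g.injective
        rw [map_mul, map_one, g.apply_symm_apply, g.apply_symm_apply]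
        ext
        · simp
        · simpa using mul_inv_cancel₀ hq0
      · -- p ≠ 0 ⇒ q = 0 (else unit)
        have hq0 : q = 0 := by
          by_contra hq0
          exact hnotboth ⟨isUnit_iff_ne_zero.2 hp0, isUnit_iff_ne_zero.2 hq0⟩
        left
        have hxeq : x = g.symm (p, 1) * x₁ := by
          apply g.injective
          rw [map_mul, g.apply_symm_apply, hgx₁]
          ext
          · simp [hp]
          · simpa using hq0
        refine span_eq_of_unit_mul ?_ hxeq
        refine isUnit_iff_exists_inv.2 ⟨g.symm (p⁻¹, 1), ?_⟩
        apply g.injective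
        rw [map_mul, map_one, g.apply_symm_apply, g.apply_symm_apply]
        ext
        · simpa using mul_inv_cancel₀ hp0
        · simp
    have hsuptop : Ideal.span {x₁} ⊔ Ideal.span {x₂} = ⊤ := by
      rw [Ideal.eq_top_iff_one]
      refine Submodule.mem_sup.2 ⟨x₁, Ideal.mem_span_singleton_self x₁,
        x₂, Ideal.mem_span_singleton_self x₂, ?_⟩
      apply g.injective
      rw [map_add, map_one, hgx₁, hgx₂]
      ext <;> simp
    constructor
    · refine ⟨⟨Ideal.span {x₁}, x₁, hu1, hJ1, rfl⟩, ⟨Ideal.span {x₂}, x₂, hu2, hJ2, rfl⟩, ?_⟩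
      intro hh
      exact hspanne (congrArg Subtype.val hh)
    · rintro ⟨I, x, hxu, hxJ, rfl⟩ ⟨I', y, hyu, hyJ, rfl⟩ hab
      refine ⟨hab, ?_⟩
      show Ideal.span {x} ⊔ Ideal.span {y} = ⊤
      have hIne : Ideal.span {x} ≠ Ideal.span {y} :=
        fun heq => hab (Subtype.ext heq)
      rcases hclass x hxu hxJ with hx | hx <;> rcases hclass y hyu hyJ with hy | hy
      · exact absurd (hx.trans hy.symm) hIne
      · rw [hx, hy]; exact hsuptop
      · rw [hx, hy, sup_comm]; exact hsuptop
      · exact absurd (hx.trans hy.symm) hIne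
end

section
/- Let R be a commutative ring with identity that is not a local ring. Then the graph Γ_r(R) has diameter two if and only if one of the following holds: (1) the Jacobson radical J(R) is a prime ideal of R; or (2) R has exactly two maximal ideals and R is not isomorphic to F₁ × F₂ for any fields F₁ and F₂. -/
universe u

section Auxiliary
variable {R : Type u} [CommRing R]

lemma memJ_iff {x : R} :
    x ∈ (⊥ : Ideal R).jacobson ↔ ∀ m : Ideal R, m.IsMaximal → x ∈ m := by
  rw [Ideal.jacobson, Ideal.mem_sInf]
  exact ⟨fun h m hm => h ⟨bot_le, hm⟩, fun h J hJ => h J hJ.2⟩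

lemma not_comax_iff {x y : R} :
    Ideal.span {x} ⊔ Ideal.span {y} ≠ ⊤ ↔
      ∃ m : Ideal R, m.IsMaximal ∧ x ∈ m ∧ y ∈ m := by
  constructor
  · intro h
    obtain ⟨m, hm, hle⟩ := Ideal.exists_le_maximal _ h
    exact ⟨m, hm, hle (Ideal.mem_sup_left (Ideal.subset_span rfl)),
      hle (Ideal.mem_sup_right (Ideal.subset_span rfl))⟩
  · rintro ⟨m, hm, hx, hy⟩ htop
    exact hm.ne_top (top_le_iff.mp (htop ▸ sup_le
      ((Ideal.span_singleton_le_iff_mem m).mpr hx)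
      ((Ideal.span_singleton_le_iff_mem m).mpr hy)))

lemma comax_mul {x y z : R} (hx : Ideal.span {x} ⊔ Ideal.span {z} = ⊤)
    (hy : Ideal.span {y} ⊔ Ideal.span {z} = ⊤) :
    Ideal.span {x * y} ⊔ Ideal.span {z} = ⊤ := by
  by_contra hc
  obtain ⟨m, hm, hxy, hz⟩ := not_comax_iff.mp hc
  rcases hm.isPrime.mem_or_mem hxy with h' | h'
  · exact not_comax_iff.mpr ⟨m, hm, h', hz⟩ hx
  · exact not_comax_iff.mpr ⟨m, hm, h', hz⟩ hy

lemma nonunit_of_mem_maximal {x : R} {m : Ideal R} (hm : m.IsMaximal) (hx : x ∈ m) :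
    ¬IsUnit x := fun hu => hm.ne_top (m.eq_top_of_isUnit_mem hx hu)

/-- shorthand to build a vertex of `Γ_r(R)` -/
def mkVert (x : R) (h1 : ¬IsUnit x) (h2 : x ∉ (⊥ : Ideal R).jacobson) : GammaRVert R :=
  ⟨Ideal.span {x}, x, h1, h2, rfl⟩

lemma exists_common {x y : R} (hx : ¬IsUnit x)
    (hxy : x * y ∉ (⊥ : Ideal R).jacobson) :
    ∃ z : R, ¬IsUnit z ∧ z ∉ (⊥ : Ideal R).jacobson ∧
      Ideal.span {z} ⊔ Ideal.span {x} = ⊤ ∧ Ideal.span {z} ⊔ Ideal.span {y} = ⊤ := by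
  rw [memJ_iff] at hxy; push_neg at hxy
  obtain ⟨m₀, hm₀, hxm₀⟩ := hxy
  have hxyu : ¬IsUnit (x * y) := fun hu => hx (isUnit_of_mul_isUnit_left hu)
  obtain ⟨m₁, hm₁, hle₁⟩ := Ideal.exists_le_maximal (Ideal.span {x*y})
    (fun htop => hxyu (Ideal.span_singleton_eq_top.mp htop))
  have hsup : m₀ ⊔ Ideal.span {x*y} = ⊤ := by
    by_contra hc
    obtain ⟨m', hm', hle⟩ := Ideal.exists_le_maximal _ hc
    have h1 : m₀ = m' := hm₀.eq_of_le hm'.ne_top (le_sup_left.trans hle)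
    have h2 : x*y ∈ m' := (le_sup_right.trans hle) (Ideal.subset_span rfl)
    rw [← h1] at h2
    exact hxm₀ h2
  obtain ⟨z, hz, v, hv, hzv⟩ := Submodule.mem_sup.mp ((Ideal.eq_top_iff_one _).mp hsup)
  refine ⟨z, nonunit_of_mem_maximal hm₀ hz, ?_, ?_, ?_⟩
  · rw [memJ_iff]; push_neg
    exact ⟨m₁, hm₁, fun hzm₁ => hm₁.ne_top ((Ideal.eq_top_iff_one m₁).mpr
      (hzv ▸ m₁.add_mem hzm₁ (hle₁ hv)))⟩
  · by_contra hc
    obtain ⟨m, hm, hzm, hxm⟩ := not_comax_iff.mp hc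
    have hxym : x*y ∈ m := m.mul_mem_right y hxm
    exact hm.ne_top ((Ideal.eq_top_iff_one m).mpr
      (hzv ▸ m.add_mem hzm ((Ideal.span_singleton_le_iff_mem m).mpr hxym hv)))
  · by_contra hc
    obtain ⟨m, hm, hzm, hym⟩ := not_comax_iff.mp hc
    have hxym : x*y ∈ m := m.mul_mem_left x hym
    exact hm.ne_top ((Ideal.eq_top_iff_one m).mpr
      (hzv ▸ m.add_mem hzm ((Ideal.span_singleton_le_iff_mem m).mpr hxym hv)))

lemma exists_two_maximal [Nontrivial R] (h : ¬IsLocalRing R) :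
    ∃ m n : Ideal R, m.IsMaximal ∧ n.IsMaximal ∧ m ≠ n := by
  obtain ⟨m, hm⟩ := Ideal.exists_maximal R
  by_contra hc; push_neg at hc
  exact h (IsLocalRing.of_unique_max_ideal ⟨m, hm, fun n hn => hc n m hn hm⟩)

end Auxiliary

section GraphAux
variable {V : Type*} {G : SimpleGraph V} {u v w : V}

lemma edist_le_two_of_adj (h1 : G.Adj u w) (h2 : G.Adj w v) : G.edist u v ≤ 2 :=
  calc G.edist u v ≤ G.edist u w + G.edist w v := G.edist_triangle
  _ ≤ 1 + 1 := add_le_add (SimpleGraph.edist_eq_one_iff_adj.mpr h1).le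
      (SimpleGraph.edist_eq_one_iff_adj.mpr h2).le
  _ = 2 := by norm_num

lemma two_le_edist_of (hne : u ≠ v) (hnadj : ¬G.Adj u v) : 2 ≤ G.edist u v := by
  cases hd : G.edist u v using ENat.recTopCoe with
  | top => exact le_top
  | coe n =>
    have h0 : n ≠ 0 := by
      rintro rfl
      exact hne (SimpleGraph.edist_eq_zero_iff.mp (by exact_mod_cast hd))
    have h1 : n ≠ 1 := by
      rintro rfl
      exact hnadj (SimpleGraph.edist_eq_one_iff_adj.mp (by exact_mod_cast hd))
    exact_mod_cast (by omega : 2 ≤ n)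

lemma three_le_edist_of (hne : u ≠ v) (hnadj : ¬G.Adj u v)
    (hno : ∀ w, ¬(G.Adj u w ∧ G.Adj w v)) : 3 ≤ G.edist u v := by
  cases hd : G.edist u v using ENat.recTopCoe with
  | top => exact le_top
  | coe n =>
    obtain ⟨p, hp⟩ := SimpleGraph.exists_walk_of_edist_eq_coe hd
    have h3 : 3 ≤ p.length := by
      match p with
      | .nil => exact absurd rfl hne
      | .cons h .nil => exact absurd h hnadj
      | .cons h (.cons h' .nil) => exact absurd ⟨h, h'⟩ (hno _)
      | .cons h (.cons h' (.cons h'' q)) =>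
        simp only [SimpleGraph.Walk.length_cons]; omega
    exact_mod_cast hp ▸ h3

end GraphAux

section MainAux
variable {R : Type u} [CommRing R]

lemma three_le_ediam_of {a b : R} (hab : a*b ∈ (⊥ : Ideal R).jacobson)
    (ha : a ∉ (⊥ : Ideal R).jacobson) (hb : b ∉ (⊥ : Ideal R).jacobson)
    (hsup : Ideal.span {a} ⊔ Ideal.span {b} ≠ ⊤) :
    3 ≤ (GammaR R).ediam := by
  have hau : ¬IsUnit a := fun hu => hsup
    (by rw [Ideal.span_singleton_eq_top.mpr hu, top_sup_eq])
  have hbu : ¬IsUnit b := fun hu => hsup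
    (by rw [Ideal.span_singleton_eq_top.mpr hu, sup_top_eq])
  set u := mkVert a hau ha with hu
  set v := mkVert b hbu hb with hv
  have hne : u ≠ v := by
    intro hEq
    apply ha
    have hsp : Ideal.span {a} = Ideal.span {b} := congrArg Subtype.val hEq
    have hmem : a ∈ Ideal.span {b} := hsp ▸ Ideal.subset_span rfl
    obtain ⟨r, hr⟩ := Ideal.mem_span_singleton'.mp hmem
    have haa : a*a ∈ (⊥ : Ideal R).jacobson := by
      have heq : a*a = r*(a*b) := by linear_combination (-a) * hr
      rw [heq]
      exact Ideal.mul_mem_left _ r hab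
    exact memJ_iff.mpr (fun m hm => (hm.isPrime.mem_or_mem
      (memJ_iff.mp haa m hm)).elim id id)
  have hnadj : ¬(GammaR R).Adj u v := fun hAdj => hsup hAdj.2
  have hno : ∀ w, ¬((GammaR R).Adj u w ∧ (GammaR R).Adj w v) := by
    rintro ⟨I, c, hcu, hcJ, rfl⟩ ⟨h1, h2⟩
    have hac : Ideal.span {a} ⊔ Ideal.span {c} = ⊤ := h1.2
    have hcb : Ideal.span {c} ⊔ Ideal.span {b} = ⊤ := h2.2
    have hcomp : Ideal.span {a*b} ⊔ Ideal.span {c} = ⊤ :=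
      comax_mul hac (by rwa [sup_comm] at hcb)
    obtain ⟨m, hm, hcm⟩ := Ideal.exists_le_maximal (Ideal.span {c})
      (fun htop => hcu (Ideal.span_singleton_eq_top.mp htop))
    exact not_comax_iff.mpr ⟨m, hm, memJ_iff.mp hab m hm,
      hcm (Ideal.subset_span rfl)⟩ hcomp
  exact le_trans (three_le_edist_of hne hnadj hno) SimpleGraph.edist_le_ediam

lemma three_le_ediam_swap {a b : R} {m₁ m₂ : Ideal R} (h₁ : m₁.IsMaximal)
    (h₂ : m₂.IsMaximal) (hne : m₁ ≠ m₂) (ha₁ : a ∈ m₁) (ha₂ : a ∈ m₂)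
    (hab : a*b ∈ (⊥ : Ideal R).jacobson) (ha : a ∉ (⊥ : Ideal R).jacobson)
    (hcom : Ideal.span {a} ⊔ Ideal.span {b} = ⊤) :
    3 ≤ (GammaR R).ediam := by
  have hsup12 : m₁ ⊔ m₂ = ⊤ := h₁.coprime_of_ne h₂ hne
  obtain ⟨e, he, f, hf, hef⟩ := Submodule.mem_sup.mp ((Ideal.eq_top_iff_one _).mp hsup12)
  have hbm₂ : b ∉ m₂ := fun hbm => not_comax_iff.mpr ⟨m₂, h₂, ha₂, hbm⟩ hcom
  have hem₂ : e ∉ m₂ := fun hEm => h₂.ne_top ((Ideal.eq_top_iff_one _).mpr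
    (hef ▸ m₂.add_mem hEm hf))
  have hbe₂ : b*e ∉ m₂ := fun hmem => (h₂.isPrime.mem_or_mem hmem).elim hbm₂ hem₂
  have hbeJ : b*e ∉ (⊥ : Ideal R).jacobson := fun hmem => hbe₂ (memJ_iff.mp hmem m₂ h₂)
  have habe : a*(b*e) ∈ (⊥ : Ideal R).jacobson := by
    have heq : a*(b*e) = (a*b)*e := by ring
    rw [heq]
    exact Ideal.mul_mem_right _ _ hab
  have hnsup : Ideal.span {a} ⊔ Ideal.span {b*e} ≠ ⊤ :=
    not_comax_iff.mpr ⟨m₁, h₁, ha₁, m₁.mul_mem_left b he⟩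
  exact three_le_ediam_of habe ha hbeJ hnsup

end MainAux

/-- Proposition 4.8: for a non-local commutative ring `R`, the graph `Γ_r(R)` has
diameter two iff either `J(R)` is a prime ideal, or `R` has exactly two maximal ideals
and `R` is not isomorphic to a product of two fields. -/
theorem gammaR_diam_two_iff (R : Type u) [CommRing R] [Nontrivial R]
    (h : ¬IsLocalRing R) :
    (GammaR R).ediam = 2 ↔
      ((⊥ : Ideal R).jacobson.IsPrime ∨
        ((∃ m n : Ideal R, m.IsMaximal ∧ n.IsMaximal ∧ m ≠ n ∧
            ∀ p : Ideal R, p.IsMaximal → p = m ∨ p = n) ∧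
          ¬∃ (F₁ F₂ : Type u) (_ : Field F₁) (_ : Field F₂),
            Nonempty (R ≃+* (F₁ × F₂)))) := by
  constructor
  · -- forward direction
    intro hdiam
    by_contra hrhs
    rw [not_or] at hrhs
    obtain ⟨hnp, hq⟩ := hrhs
    by_cases hS : ∃ (F₁ F₂ : Type u) (_ : Field F₁) (_ : Field F₂),
        Nonempty (R ≃+* (F₁ × F₂))
    · -- product of two fields : the graph is complete, diameter ≤ 1
      obtain ⟨F₁, F₂, i₁, i₂, ⟨f⟩⟩ := hS
      have hcases : ∀ z : R, ¬IsUnit z → z ∉ (⊥ : Ideal R).jacobson →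
          ((f z).1 ≠ 0 ∧ (f z).2 = 0) ∨ ((f z).1 = 0 ∧ (f z).2 ≠ 0) := by
        intro z hzu hzJ
        have h0 : f z ≠ 0 := by
          intro hz0
          apply hzJ
          have hz : z = 0 := by
            have := congrArg f.symm hz0
            simpa using this
          rw [hz]; exact Submodule.zero_mem _
        by_cases h1 : (f z).1 = 0
        · exact Or.inr ⟨h1, fun h2 => h0 (Prod.ext_iff.mpr ⟨h1, h2⟩)⟩
        · by_cases h2 : (f z).2 = 0
          · exact Or.inl ⟨h1, h2⟩
          · exfalso
            apply hzu
            have : IsUnit (f z) := IsUnit.of_mul_eq_one (((f z).1⁻¹, (f z).2⁻¹))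
              (Prod.ext_iff.mpr ⟨mul_inv_cancel₀ h1, mul_inv_cancel₀ h2⟩)
            have := this.map f.symm.toRingHom
            simpa using this
      have hadj : ∀ u v : GammaRVert R, u ≠ v → (GammaR R).Adj u v := by
        rintro ⟨I, x, hxu, hxJ, rfl⟩ ⟨I', y, hyu, hyJ, rfl⟩ hne
        refine ⟨hne, ?_⟩
        have same : ∀ x y : R, (f x).1 ≠ 0 → (f x).2 = 0 → (f y).1 ≠ 0 → (f y).2 = 0 →
            Ideal.span {y} ≤ Ideal.span {x} := by
          intro x y hx1 hx2 hy1 hy2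
          rw [Ideal.span_singleton_le_iff_mem, Ideal.mem_span_singleton']
          refine ⟨f.symm ((f y).1 * ((f x).1)⁻¹, 1), f.injective ?_⟩
          rw [map_mul, RingEquiv.apply_symm_apply]
          refine Prod.ext_iff.mpr ⟨?_, ?_⟩
          · show (f y).1 * ((f x).1)⁻¹ * (f x).1 = (f y).1
            rw [mul_assoc, inv_mul_cancel₀ hx1, mul_one]
          · show 1 * (f x).2 = (f y).2
            rw [one_mul, hx2, hy2]
        have same2 : ∀ x y : R, (f x).1 = 0 → (f x).2 ≠ 0 → (f y).1 = 0 → (f y).2 ≠ 0 →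
            Ideal.span {y} ≤ Ideal.span {x} := by
          intro x y hx1 hx2 hy1 hy2
          rw [Ideal.span_singleton_le_iff_mem, Ideal.mem_span_singleton']
          refine ⟨f.symm (1, (f y).2 * ((f x).2)⁻¹), f.injective ?_⟩
          rw [map_mul, RingEquiv.apply_symm_apply]
          refine Prod.ext_iff.mpr ⟨?_, ?_⟩
          · show 1 * (f x).1 = (f y).1
            rw [one_mul, hx1, hy1]
          · show (f y).2 * ((f x).2)⁻¹ * (f x).2 = (f y).2
            rw [mul_assoc, inv_mul_cancel₀ hx2, mul_one]
        have cross : ∀ x y : R, (f x).1 ≠ 0 → (f y).2 ≠ 0 →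
            Ideal.span {x} ⊔ Ideal.span {y} = ⊤ := by
          intro x y hx1 hy2
          rw [Ideal.eq_top_iff_one]
          refine Submodule.mem_sup.mpr ⟨f.symm (((f x).1)⁻¹, 0) * x,
            Ideal.mem_span_singleton'.mpr ⟨_, rfl⟩,
            f.symm (0, ((f y).2)⁻¹) * y,
            Ideal.mem_span_singleton'.mpr ⟨_, rfl⟩, f.injective ?_⟩
          rw [map_add, map_one, map_mul, map_mul, RingEquiv.apply_symm_apply,
            RingEquiv.apply_symm_apply]
          refine Prod.ext_iff.mpr ⟨?_, ?_⟩
          · show ((f x).1)⁻¹ * (f x).1 + 0 * (f y).1 = 1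
            rw [inv_mul_cancel₀ hx1, zero_mul, add_zero]
          · show 0 * (f x).2 + ((f y).2)⁻¹ * (f y).2 = 1
            rw [inv_mul_cancel₀ hy2, zero_mul, zero_add]
        rcases hcases x hxu hxJ with ⟨hx1, hx2⟩ | ⟨hx1, hx2⟩ <;>
          rcases hcases y hyu hyJ with ⟨hy1, hy2⟩ | ⟨hy1, hy2⟩
        · exact absurd (Subtype.ext (le_antisymm (same y x hy1 hy2 hx1 hx2)
            (same x y hx1 hx2 hy1 hy2))) hne
        · exact cross x y hx1 hy2
        · rw [sup_comm]; exact cross y x hy1 hx2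
        · exact absurd (Subtype.ext (le_antisymm (same2 y x hy1 hy2 hx1 hx2)
            (same2 x y hx1 hx2 hy1 hy2))) hne
      have hle : (GammaR R).ediam ≤ 1 := by
        apply SimpleGraph.ediam_le_of_edist_le
        intro u v
        by_cases huv : u = v
        · rw [huv, SimpleGraph.edist_self]; norm_num
        · exact (SimpleGraph.edist_eq_one_iff_adj.mpr (hadj u v huv)).le
      rw [hdiam] at hle
      exact (by norm_num : ¬(2 : ℕ∞) ≤ 1) hle
    · -- at least three maximal ideals, J not prime
      have hnq : ¬∃ m n : Ideal R, m.IsMaximal ∧ n.IsMaximal ∧ m ≠ n ∧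
          ∀ p : Ideal R, p.IsMaximal → p = m ∨ p = n := fun hQ => hq ⟨hQ, hS⟩
      obtain ⟨m, n, hm, hn, hmn⟩ := exists_two_maximal h
      obtain ⟨p, hp, hpm, hpn⟩ : ∃ p : Ideal R, p.IsMaximal ∧ p ≠ m ∧ p ≠ n := by
        by_contra hc; push_neg at hc
        refine hnq ⟨m, n, hm, hn, hmn, fun p hpmax => ?_⟩
        by_cases h1 : p = m
        · exact Or.inl h1
        · exact Or.inr (hc p hpmax h1)
      obtain ⟨a, ha, b, hb, hab⟩ : ∃ a, a ∉ (⊥ : Ideal R).jacobson ∧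
          ∃ b, b ∉ (⊥ : Ideal R).jacobson ∧ a * b ∈ (⊥ : Ideal R).jacobson := by
        rcases Ideal.not_isPrime_iff.mp hnp with htop | ⟨a, ha, b, hb, hab⟩
        · exact absurd (memJ_iff.mp ((Ideal.eq_top_iff_one _).mp htop) m hm)
            (fun h1 => hm.ne_top ((Ideal.eq_top_iff_one _).mpr h1))
        · exact ⟨a, ha, b, hb, hab⟩
      have h3 : 3 ≤ (GammaR R).ediam := by
        by_cases hcom : Ideal.span {a} ⊔ Ideal.span {b} = ⊤
        · have key : ∀ q : Ideal R, q.IsMaximal → a ∈ q ∨ b ∈ q :=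
            fun q hq' => hq'.isPrime.mem_or_mem (memJ_iff.mp hab q hq')
          have hab' : b * a ∈ (⊥ : Ideal R).jacobson := by rwa [mul_comm] at hab
          have hcom' : Ideal.span {b} ⊔ Ideal.span {a} = ⊤ := by rwa [sup_comm] at hcom
          by_cases ham : a ∈ m
          · by_cases han : a ∈ n
            · exact three_le_ediam_swap hm hn hmn ham han hab ha hcom
            · by_cases hap : a ∈ p
              · exact three_le_ediam_swap hm hp (Ne.symm hpm) ham hap hab ha hcom
              · exact three_le_ediam_swap hn hp (Ne.symm hpn)
                  ((key n hn).resolve_left han) ((key p hp).resolve_left hap)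
                  hab' hb hcom'
          · have hbm := (key m hm).resolve_left ham
            by_cases hbn : b ∈ n
            · exact three_le_ediam_swap hm hn hmn hbm hbn hab' hb hcom'
            · by_cases hbp : b ∈ p
              · exact three_le_ediam_swap hm hp (Ne.symm hpm) hbm hbp hab' hb hcom'
              · exact three_le_ediam_swap hn hp (Ne.symm hpn)
                  ((key n hn).resolve_right hbn) ((key p hp).resolve_right hbp)
                  hab ha hcom
        · exact three_le_ediam_of hab ha hb hcom
      rw [hdiam] at h3
      exact (by norm_num : ¬(3 : ℕ∞) ≤ 2) h3
  · -- backward direction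
    intro hrhs
    rcases hrhs with hP | ⟨⟨m, n, hm, hn, hmn, hclass⟩, hprod⟩
    · -- J(R) is prime
      have hle2 : (GammaR R).ediam ≤ 2 := by
        apply SimpleGraph.ediam_le_of_edist_le
        intro u v
        obtain ⟨x, hxu, hxJ, hIx⟩ := u.2
        obtain ⟨y, hyu, hyJ, hIy⟩ := v.2
        by_cases huv : u = v
        · rw [huv, SimpleGraph.edist_self]; norm_num
        by_cases hsup : u.1 ⊔ v.1 = ⊤
        · exact le_trans (SimpleGraph.edist_eq_one_iff_adj.mpr
            (show (GammaR R).Adj u v from ⟨huv, hsup⟩)).le (by norm_num)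
        · have hxyJ : x*y ∉ (⊥ : Ideal R).jacobson := fun hmem =>
            (hP.mem_or_mem hmem).elim hxJ hyJ
          obtain ⟨z, hzu, hzJ, hzx, hzy⟩ := exists_common hxu hxyJ
          have hwu : (GammaR R).Adj u (mkVert z hzu hzJ) := by
            constructor
            · intro hEq
              apply hxu
              rw [← Ideal.span_singleton_eq_top]
              have h1 : Ideal.span {x} = Ideal.span {z} := by
                rw [← hIx, hEq]; rfl
              have h2 := hzx
              rw [← h1, sup_idem] at h2
              exact h2
            · rw [hIx]
              show Ideal.span {x} ⊔ Ideal.span {z} = ⊤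
              rwa [sup_comm]
          have hwv : (GammaR R).Adj (mkVert z hzu hzJ) v := by
            constructor
            · intro hEq
              apply hyu
              rw [← Ideal.span_singleton_eq_top]
              have h1 : Ideal.span {y} = Ideal.span {z} := by
                rw [← hIy, ← hEq]; rfl
              have h2 := hzy
              rw [← h1, sup_idem] at h2
              exact h2
            · rw [hIy]
              show Ideal.span {z} ⊔ Ideal.span {y} = ⊤
              exact hzy
          exact edist_le_two_of_adj hwu hwv
      have h2le : 2 ≤ (GammaR R).ediam := by
        obtain ⟨m, n, hm, hn, hmn⟩ := exists_two_maximal h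
        obtain ⟨x, hxm, hxn⟩ : ∃ x, x ∈ m ∧ x ∉ n := by
          by_contra hc; push_neg at hc
          exact hmn (hm.eq_of_le hn.ne_top hc)
        obtain ⟨y, hyn, hym⟩ : ∃ y, y ∈ n ∧ y ∉ m := by
          by_contra hc; push_neg at hc
          exact hmn.symm (hn.eq_of_le hm.ne_top hc)
        have hxJ : x ∉ (⊥ : Ideal R).jacobson := fun hmem => hxn (memJ_iff.mp hmem n hn)
        have hyJ : y ∉ (⊥ : Ideal R).jacobson := fun hmem => hym (memJ_iff.mp hmem m hm)
        have hxu := nonunit_of_mem_maximal hm hxm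
        have hyu := nonunit_of_mem_maximal hn hyn
        have hxyJ : x*y ∉ (⊥ : Ideal R).jacobson := fun hmem =>
          (hP.mem_or_mem hmem).elim hxJ hyJ
        have hxyu : ¬IsUnit (x*y) := fun hu => hxu (isUnit_of_mul_isUnit_left hu)
        by_cases hkey : Ideal.span {x} = Ideal.span {x*y}
        · have hne : mkVert y hyu hyJ ≠ mkVert (x*y) hxyu hxyJ := by
            intro hEq
            have h1 : Ideal.span {y} = Ideal.span {x*y} := congrArg Subtype.val hEq
            have hmem : x ∈ Ideal.span {y} := by
              rw [h1, ← hkey]; exact Ideal.subset_span rfl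
            exact hxn ((Ideal.span_singleton_le_iff_mem n).mpr hyn hmem)
          have hnadj : ¬(GammaR R).Adj (mkVert y hyu hyJ) (mkVert (x*y) hxyu hxyJ) :=
            fun hAdj => not_comax_iff.mpr ⟨n, hn, hyn, n.mul_mem_left x hyn⟩ hAdj.2
          exact le_trans (two_le_edist_of hne hnadj) SimpleGraph.edist_le_ediam
        · have hne : mkVert x hxu hxJ ≠ mkVert (x*y) hxyu hxyJ :=
            fun hEq => hkey (congrArg Subtype.val hEq)
          have hnadj : ¬(GammaR R).Adj (mkVert x hxu hxJ) (mkVert (x*y) hxyu hxyJ) :=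
            fun hAdj => not_comax_iff.mpr ⟨m, hm, hxm, m.mul_mem_right y hxm⟩ hAdj.2
          exact le_trans (two_le_edist_of hne hnadj) SimpleGraph.edist_le_ediam
      exact le_antisymm hle2 h2le
    · -- exactly two maximal ideals, not a product of two fields
      have memJ2 : ∀ z : R, z ∈ (⊥ : Ideal R).jacobson ↔ z ∈ m ∧ z ∈ n :=
        fun z => ⟨fun hz => ⟨memJ_iff.mp hz m hm, memJ_iff.mp hz n hn⟩,
          fun ⟨h1, h2⟩ => memJ_iff.mpr (fun p hp => (hclass p hp).elim
            (fun e => e ▸ h1) (fun e => e ▸ h2))⟩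
      have classify : ∀ z : R, ¬IsUnit z → z ∉ (⊥ : Ideal R).jacobson →
          (z ∈ m ∧ z ∉ n) ∨ (z ∈ n ∧ z ∉ m) := by
        intro z hzu hzJ
        obtain ⟨p, hp, hle⟩ := Ideal.exists_le_maximal (Ideal.span {z})
          (fun htop => hzu (Ideal.span_singleton_eq_top.mp htop))
        have hzp : z ∈ p := hle (Ideal.subset_span rfl)
        have hnboth : ¬(z ∈ m ∧ z ∈ n) := fun hb => hzJ ((memJ2 z).mpr hb)
        rcases hclass p hp with rfl | rfl
        · exact Or.inl ⟨hzp, fun h2 => hnboth ⟨hzp, h2⟩⟩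
        · exact Or.inr ⟨hzp, fun h2 => hnboth ⟨h2, hzp⟩⟩
      have cross : ∀ x y : R, x ∈ m → x ∉ n → y ∈ n → y ∉ m →
          Ideal.span {x} ⊔ Ideal.span {y} = ⊤ := by
        intro x y hxm hxn hyn hym
        by_contra hc
        obtain ⟨p, hp, hxp, hyp⟩ := not_comax_iff.mp hc
        rcases hclass p hp with rfl | rfl
        · exact hym hyp
        · exact hxn hxp
      obtain ⟨x₀, hx₀m, hx₀n⟩ : ∃ x, x ∈ m ∧ x ∉ n := by
        by_contra hc; push_neg at hc
        exact hmn (hm.eq_of_le hn.ne_top hc)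
      obtain ⟨y₀, hy₀n, hy₀m⟩ : ∃ y, y ∈ n ∧ y ∉ m := by
        by_contra hc; push_neg at hc
        exact hmn.symm (hn.eq_of_le hm.ne_top hc)
      have vertm : ∀ z : R, z ∈ m → z ∉ n →
          ¬IsUnit z ∧ z ∉ (⊥ : Ideal R).jacobson :=
        fun z h1 h2 => ⟨nonunit_of_mem_maximal hm h1,
          fun hz => h2 (memJ_iff.mp hz n hn)⟩
      have vertn : ∀ z : R, z ∈ n → z ∉ m →
          ¬IsUnit z ∧ z ∉ (⊥ : Ideal R).jacobson :=
        fun z h1 h2 => ⟨nonunit_of_mem_maximal hn h1,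
          fun hz => h2 (memJ_iff.mp hz m hm)⟩
      have hle2 : (GammaR R).ediam ≤ 2 := by
        apply SimpleGraph.ediam_le_of_edist_le
        intro u v
        by_cases huv : u = v
        · rw [huv, SimpleGraph.edist_self]; norm_num
        obtain ⟨x, hxu, hxJ, hIx⟩ := u.2
        obtain ⟨y, hyu, hyJ, hIy⟩ := v.2
        rcases classify x hxu hxJ with ⟨h1, h2⟩ | ⟨h1, h2⟩ <;>
          rcases classify y hyu hyJ with ⟨h3, h4⟩ | ⟨h3, h4⟩
        · -- both in m : common neighbor y₀
          obtain ⟨hy₀u, hy₀J⟩ := vertn y₀ hy₀n hy₀m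
          have hwu : (GammaR R).Adj u (mkVert y₀ hy₀u hy₀J) := by
            constructor
            · intro hEq
              apply h2
              have : x ∈ u.1 := hIx ▸ Ideal.subset_span rfl
              rw [hEq] at this
              exact (Ideal.span_singleton_le_iff_mem n).mpr hy₀n this
            · rw [hIx]
              show Ideal.span {x} ⊔ Ideal.span {y₀} = ⊤
              exact cross x y₀ h1 h2 hy₀n hy₀m
          have hwv : (GammaR R).Adj (mkVert y₀ hy₀u hy₀J) v := by
            constructor
            · intro hEq
              apply h4
              have : y ∈ v.1 := hIy ▸ Ideal.subset_span rfl
              rw [← hEq] at this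
              exact (Ideal.span_singleton_le_iff_mem n).mpr hy₀n this
            · rw [hIy]
              show Ideal.span {y₀} ⊔ Ideal.span {y} = ⊤
              rw [sup_comm]
              exact cross y y₀ h3 h4 hy₀n hy₀m
          exact edist_le_two_of_adj hwu hwv
        · -- x in m, y in n : adjacent
          refine le_trans (SimpleGraph.edist_eq_one_iff_adj.mpr
            (show (GammaR R).Adj u v from ⟨huv, ?_⟩)).le (by norm_num)
          rw [hIx, hIy]
          exact cross x y h1 h2 h3 h4
        · -- x in n, y in m : adjacent
          refine le_trans (SimpleGraph.edist_eq_one_iff_adj.mpr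
            (show (GammaR R).Adj u v from ⟨huv, ?_⟩)).le (by norm_num)
          rw [hIx, hIy, sup_comm]
          exact cross y x h3 h4 h1 h2
        · -- both in n : common neighbor x₀
          obtain ⟨hx₀u, hx₀J⟩ := vertm x₀ hx₀m hx₀n
          have hwu : (GammaR R).Adj u (mkVert x₀ hx₀u hx₀J) := by
            constructor
            · intro hEq
              apply h2
              have : x ∈ u.1 := hIx ▸ Ideal.subset_span rfl
              rw [hEq] at this
              exact (Ideal.span_singleton_le_iff_mem m).mpr hx₀m this
            · rw [hIx]
              show Ideal.span {x} ⊔ Ideal.span {x₀} = ⊤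
              rw [sup_comm]
              exact cross x₀ x hx₀m hx₀n h1 h2
          have hwv : (GammaR R).Adj (mkVert x₀ hx₀u hx₀J) v := by
            constructor
            · intro hEq
              apply h4
              have : y ∈ v.1 := hIy ▸ Ideal.subset_span rfl
              rw [← hEq] at this
              exact (Ideal.span_singleton_le_iff_mem m).mpr hx₀m this
            · rw [hIy]
              show Ideal.span {x₀} ⊔ Ideal.span {y} = ⊤
              exact cross x₀ y hx₀m hx₀n h3 h4
          exact edist_le_two_of_adj hwu hwv
      have h2le : 2 ≤ (GammaR R).ediam := by
        by_cases hA : ∃ x y : R, (x ∈ m ∧ x ∉ n) ∧ (y ∈ m ∧ y ∉ n) ∧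
            Ideal.span {x} ≠ Ideal.span {y}
        · obtain ⟨x, y, ⟨hx1, hx2⟩, ⟨hy1, hy2⟩, hne⟩ := hA
          obtain ⟨hxu, hxJ⟩ := vertm x hx1 hx2
          obtain ⟨hyu, hyJ⟩ := vertm y hy1 hy2
          have hneuv : mkVert x hxu hxJ ≠ mkVert y hyu hyJ :=
            fun hEq => hne (congrArg Subtype.val hEq)
          have hnadj : ¬(GammaR R).Adj (mkVert x hxu hxJ) (mkVert y hyu hyJ) :=
            fun hAdj => not_comax_iff.mpr ⟨m, hm, hx1, hy1⟩ hAdj.2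
          exact le_trans (two_le_edist_of hneuv hnadj) SimpleGraph.edist_le_ediam
        by_cases hB : ∃ x y : R, (x ∈ n ∧ x ∉ m) ∧ (y ∈ n ∧ y ∉ m) ∧
            Ideal.span {x} ≠ Ideal.span {y}
        · obtain ⟨x, y, ⟨hx1, hx2⟩, ⟨hy1, hy2⟩, hne⟩ := hB
          obtain ⟨hxu, hxJ⟩ := vertn x hx1 hx2
          obtain ⟨hyu, hyJ⟩ := vertn y hy1 hy2
          have hneuv : mkVert x hxu hxJ ≠ mkVert y hyu hyJ :=
            fun hEq => hne (congrArg Subtype.val hEq)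
          have hnadj : ¬(GammaR R).Adj (mkVert x hxu hxJ) (mkVert y hyu hyJ) :=
            fun hAdj => not_comax_iff.mpr ⟨n, hn, hx1, hy1⟩ hAdj.2
          exact le_trans (two_le_edist_of hneuv hnadj) SimpleGraph.edist_le_ediam
        · exfalso
          apply hprod
          push_neg at hA hB
          have hmspan : m = Ideal.span {x₀} := by
            have hsub : (m : Set R) ⊆ ↑(Ideal.span {x₀}) ∪ ↑n := by
              intro z hz
              by_cases hzn : z ∈ n
              · exact Or.inr hzn
              · exact Or.inl (by
                  rw [← hA z x₀ ⟨hz, hzn⟩ ⟨hx₀m, hx₀n⟩]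
                  exact Ideal.subset_span rfl)
            rcases Ideal.subset_union.mp hsub with hle | hle
            · exact le_antisymm hle ((Ideal.span_singleton_le_iff_mem m).mpr hx₀m)
            · exact absurd (hm.eq_of_le hn.ne_top hle) hmn
          have hnspan : n = Ideal.span {y₀} := by
            have hsub : (n : Set R) ⊆ ↑(Ideal.span {y₀}) ∪ ↑m := by
              intro z hz
              by_cases hzm : z ∈ m
              · exact Or.inr hzm
              · exact Or.inl (by
                  rw [← hB z y₀ ⟨hz, hzm⟩ ⟨hy₀n, hy₀m⟩]
                  exact Ideal.subset_span rfl)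
            rcases Ideal.subset_union.mp hsub with hle | hle
            · exact le_antisymm hle ((Ideal.span_singleton_le_iff_mem n).mpr hy₀n)
            · exact absurd (hn.eq_of_le hm.ne_top hle) hmn.symm
          have hx₀₂n : x₀*x₀ ∉ n := fun hmem =>
            hx₀n ((hn.isPrime.mem_or_mem hmem).elim id id)
          have hy₀₂m : y₀*y₀ ∉ m := fun hmem =>
            hy₀m ((hm.isPrime.mem_or_mem hmem).elim id id)
          obtain ⟨r, hr⟩ : ∃ r, r * (x₀*x₀) = x₀ := by
            rw [← Ideal.mem_span_singleton',
              hA (x₀*x₀) x₀ ⟨m.mul_mem_right x₀ hx₀m, hx₀₂n⟩ ⟨hx₀m, hx₀n⟩]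
            exact Ideal.subset_span rfl
          obtain ⟨s, hs⟩ : ∃ s, s * (y₀*y₀) = y₀ := by
            rw [← Ideal.mem_span_singleton',
              hB (y₀*y₀) y₀ ⟨n.mul_mem_right y₀ hy₀n, hy₀₂m⟩ ⟨hy₀n, hy₀m⟩]
            exact Ideal.subset_span rfl
          set e := r * x₀ with hedef
          set f := s * y₀ with hfdef
          have hee : e * e = e := by rw [hedef]; linear_combination r * hr
          have hff : f * f = f := by rw [hfdef]; linear_combination s * hs
          have hex : e * x₀ = x₀ := by rw [hedef]; linear_combination hr
          have hfy : f * y₀ = y₀ := by rw [hfdef]; linear_combination hs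
          have hem : e ∈ m := m.mul_mem_left r hx₀m
          have hfn : f ∈ n := n.mul_mem_left s hy₀n
          have hefJ : e*f ∈ (⊥ : Ideal R).jacobson :=
            (memJ2 _).mpr ⟨m.mul_mem_right f hem, n.mul_mem_left e hfn⟩
          have hef0 : e*f = 0 := by
            have hid : (e*f) * (e*f) = e*f := by
              linear_combination (f*f) * hee + e * hff
            have hunit : IsUnit (e*f*(-1)+1) := Ideal.mem_jacobson_bot.mp hefJ (-1)
            obtain ⟨c, hc⟩ := isUnit_iff_exists_inv'.mp hunit
            have h0 : (e*f) * (e*f*(-1)+1) = 0 := by linear_combination (-1) * hid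
            calc e*f = (e*f) * (c * (e*f*(-1)+1)) := by rw [hc, mul_one]
            _ = c * ((e*f) * (e*f*(-1)+1)) := by ring
            _ = 0 := by rw [h0, mul_zero]
          have hbot : m ⊓ n = ⊥ := by
            apply le_antisymm _ bot_le
            rintro z ⟨hzm, hzn⟩
            obtain ⟨t, ht⟩ := Ideal.mem_span_singleton'.mp (hmspan ▸ hzm)
            obtain ⟨t', ht'⟩ := Ideal.mem_span_singleton'.mp (hnspan ▸ hzn)
            have hze : z * e = z := by
              rw [← ht, mul_assoc, mul_comm x₀ e, hex]
            have hzf : z * f = z := by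
              rw [← ht', mul_assoc, mul_comm y₀ f, hfy]
            have hzef : z = z * (e*f) := by
              calc z = z * e := hze.symm
              _ = (z * f) * e := by rw [hzf]
              _ = z * (e*f) := by ring
            rw [Ideal.mem_bot, hzef, hef0, mul_zero]
          have hco : IsCoprime m n := Ideal.isCoprime_iff_sup_eq.mpr
            (hm.coprime_of_ne hn hmn)
          haveI : m.IsMaximal := hm
          haveI : n.IsMaximal := hn
          refine ⟨R ⧸ m, R ⧸ n, Ideal.Quotient.field m, Ideal.Quotient.field n, ⟨?_⟩⟩
          exact (RingEquiv.quotientBot R).symm.trans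
            ((Ideal.quotEquivOfEq (hbot.symm : (⊥ : Ideal R) = m ⊓ n)).trans
              (Ideal.quotientInfEquivQuotientProd m n hco))
      exact le_antisymm hle2 h2le
end
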